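/- B(G) = 0 if and only if G is a complete graph or an edgeless (empty) graph. -/

import Mathlib

open Finset

variable {V : Type*}

/-- A proper coloring given as a function to ℕ. -/
def IsProperColoring (G : SimpleGraph V) (c : V → ℕ) : Prop :=
  ∀ ⦃u v⦄, G.Adj u v → c u ≠ c v

variable [Fintype V] [DecidableEq V]

/-- Two colorings use every color the same number of times. -/
def SameColorCounts (c c' : V → ℕ) : Prop :=
  ∀ k : ℕ, (univ.filter fun v => c v = k).card = (univ.filter fun v => c' v = k).card

/-- The number of vertices on which two colorings differ. -/
def recolorCount (c c' : V → ℕ) : ℕ := (univ.filter fun v => c v ≠ c' v).card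

/-- The ℕ-valued chromatic number. -/
noncomputable def chromNum (G : SimpleGraph V) : ℕ := G.chromaticNumber.toNat

/-- A proper coloring of `G` using exactly `χ(G)` colors. -/
noncomputable def IsOptimalColoring (G : SimpleGraph V) (f : V → ℕ) : Prop :=
  IsProperColoring G f ∧ (univ.image f).card = chromNum G

/-- The villainy of a coloring `c`: the least number of vertices that must be
recolored to obtain a proper coloring using each color as often as `c` does. -/
noncomputable def colVillainy (G : SimpleGraph V) (c : V → ℕ) : ℕ :=
  sInf {n | ∃ c', IsProperColoring G c' ∧ SameColorCounts c c' ∧ recolorCount c c' = n}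

/-- `c` is a permutation of the coloring `f`. -/
def IsPermutationOf (c f : V → ℕ) : Prop := ∃ σ : Equiv.Perm V, c = f ∘ σ

/-- The villainy of `G`: the maximum villainy over all permutations of optimal
proper colorings of `G`. -/
noncomputable def villainy (G : SimpleGraph V) : ℕ :=
  sSup {n | ∃ f c, IsOptimalColoring G f ∧ IsPermutationOf c f ∧ colVillainy G c = n}

/- ### Auxiliary lemmas -/

lemma sameColorCounts_perm (f : V → ℕ) (σ : Equiv.Perm V) :
    SameColorCounts (f ∘ σ) f := by
  intro k
  apply Finset.card_bij (fun v _ => σ v)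
  · intro a ha
    simp only [mem_filter, mem_univ, true_and] at ha ⊢
    exact ha
  · intro a _ b _ h
    exact σ.injective h
  · intro b hb
    refine ⟨σ.symm b, ?_, by simp⟩
    simp only [mem_filter, mem_univ, true_and, Function.comp_apply, Equiv.apply_symm_apply] at hb ⊢
    exact hb

lemma recolorCount_eq_zero_iff {c c' : V → ℕ} : recolorCount c c' = 0 ↔ c = c' := by
  constructor
  · intro h
    funext v
    by_contra hv
    have hmem : v ∈ univ.filter fun v => c v ≠ c' v := by simp [hv]
    have hemp : (univ.filter fun v => c v ≠ c' v) = ∅ := Finset.card_eq_zero.mp h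
    simp [hemp] at hmem
  · intro h; subst h; simp [recolorCount]

lemma recolorCount_le (c c' : V → ℕ) : recolorCount c c' ≤ Fintype.card V := by
  classical
  simpa [recolorCount] using (Finset.card_filter_le univ fun v => c v ≠ c' v)

lemma colorable_of_proper {G : SimpleGraph V} {f : V → ℕ} (hf : IsProperColoring G f) :
    G.Colorable (univ.image f).card := by
  classical
  have C : G.Coloring (↥(univ.image f : Finset ℕ)) :=
    SimpleGraph.Coloring.mk (fun v => ⟨f v, Finset.mem_image_of_mem f (mem_univ v)⟩)
      (fun {u v} h => by
        simp only [ne_eq, Subtype.mk.injEq]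
        exact hf h)
  simpa using C.colorable

lemma chromNum_le_of_proper {G : SimpleGraph V} {f : V → ℕ} (hf : IsProperColoring G f) :
    chromNum G ≤ (univ.image f).card := by
  have h := (colorable_of_proper hf).chromaticNumber_le
  simpa [chromNum] using ENat.toNat_le_toNat h (by simp)

lemma exists_optimal (G : SimpleGraph V) : ∃ f, IsOptimalColoring G f := by
  classical
  obtain ⟨C⟩ := G.colorable_chromaticNumber_of_fintype
  refine ⟨fun v => (C v : ℕ), fun {u v} h => by
      have := C.valid h
      exact fun hv => this (Fin.val_injective hv), ?_⟩
  have hle : (univ.image fun v => (C v : ℕ)).card ≤ chromNum G := by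
    have hsub : (univ.image fun v => (C v : ℕ)) ⊆ Finset.range (chromNum G) := by
      intro x hx
      simp only [mem_image] at hx
      obtain ⟨v, _, rfl⟩ := hx
      exact Finset.mem_range.mpr (C v).2
    simpa using Finset.card_le_card hsub
  have hge := chromNum_le_of_proper (G := G) (f := fun v => (C v : ℕ))
    (fun {u v} h hv => (C.valid h) (Fin.val_injective hv))
  omega

lemma colVillainy_eq_zero_of_proper {G : SimpleGraph V} {c : V → ℕ}
    (hc : IsProperColoring G c) : colVillainy G c = 0 := by
  apply Nat.sInf_eq_zero.mpr
  exact Or.inl ⟨c, hc, fun k => rfl, recolorCount_eq_zero_iff.mpr rfl⟩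

lemma proper_of_colVillainy_eq_zero {G : SimpleGraph V} {f : V → ℕ} (σ : Equiv.Perm V)
    (hf : IsProperColoring G f) (h : colVillainy G (f ∘ σ) = 0) :
    IsProperColoring G (f ∘ σ) := by
  rcases Nat.sInf_eq_zero.mp h with h0 | hemp
  · obtain ⟨c', hc', _, hr⟩ := h0
    rwa [recolorCount_eq_zero_iff.mp hr]
  · exfalso
    have : recolorCount (f ∘ σ) f ∈
        {n | ∃ c', IsProperColoring G c' ∧ SameColorCounts (f ∘ σ) c' ∧
          recolorCount (f ∘ σ) c' = n} :=
      ⟨f, hf, sameColorCounts_perm f σ, rfl⟩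
    rw [hemp] at this
    exact this

lemma villainy_bddAbove (G : SimpleGraph V) :
    BddAbove {n | ∃ f c, IsOptimalColoring G f ∧ IsPermutationOf c f ∧ colVillainy G c = n} := by
  refine ⟨Fintype.card V, fun n hn => ?_⟩
  obtain ⟨f, c, hf, ⟨σ, rfl⟩, rfl⟩ := hn
  exact le_trans (Nat.sInf_le ⟨f, hf.1, sameColorCounts_perm f σ, rfl⟩) (recolorCount_le _ _)

theorem villainy_eq_zero_iff (G : SimpleGraph V) :
    villainy G = 0 ↔ G = ⊤ ∨ G = ⊥ := by
  classical
  constructor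
  · intro hv
    by_contra hn
    push_neg at hn
    obtain ⟨ht, hb⟩ := hn
    -- G has an edge
    obtain ⟨u, v, huv⟩ : ∃ u v, G.Adj u v := by
      by_contra h
      push_neg at h
      exact hb (by ext a b; simp [h a b])
    -- G has a non-edge
    obtain ⟨x, y, hxy, hnadj⟩ : ∃ x y, x ≠ y ∧ ¬ G.Adj x y := by
      by_contra h
      push_neg at h
      apply ht
      ext a b
      simp only [SimpleGraph.top_adj]
      exact ⟨fun hab => hab.ne, fun hab => h a b hab⟩
    -- chromatic number is less than card V
    have hchrom : chromNum G < Fintype.card V := by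
      set h₀ : V → ℕ := fun v => ((Fintype.equivFin V) v : ℕ) with hh₀
      have h₀inj : Function.Injective h₀ :=
        fun a b hab => (Fintype.equivFin V).injective (Fin.val_injective hab)
      set g : V → ℕ := fun v => if v = y then h₀ x else h₀ v with hg
      have hgproper : IsProperColoring G g := by
        intro a b hab heq
        have hne : a ≠ b := hab.ne
        simp only [hg] at heq
        by_cases hay : a = y <;> by_cases hby : b = y
        · exact hne (hay.trans hby.symm)
        · simp only [if_pos hay, if_neg hby] at heq
          have : x = b := h₀inj heq
          subst hay; subst this
          exact hnadj hab.symm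
        · simp only [if_neg hay, if_pos hby] at heq
          have : a = x := h₀inj heq
          subst hby; subst this
          exact hnadj hab
        · simp only [if_neg hay, if_neg hby] at heq
          exact hne (h₀inj heq)
      have hnever : ∀ v, g v ≠ h₀ y := by
        intro v hv
        simp only [hg] at hv
        by_cases hvy : v = y
        · rw [if_pos hvy] at hv
          exact hxy (h₀inj hv)
        · rw [if_neg hvy] at hv
          exact hvy (h₀inj hv)
      have hsub : univ.image g ⊆ (univ.image h₀).erase (h₀ y) := by
        intro k hk
        simp only [mem_image] at hk
        obtain ⟨w, _, rfl⟩ := hk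
        refine Finset.mem_erase.mpr ⟨hnever w, ?_⟩
        simp only [hg, mem_image]
        by_cases hwy : w = y
        · exact ⟨x, mem_univ x, by rw [if_pos hwy]⟩
        · exact ⟨w, mem_univ w, by rw [if_neg hwy]⟩
      have hcard : (univ.image g).card ≤ Fintype.card V - 1 := by
        have := Finset.card_le_card hsub
        have h1 : ((univ.image h₀).erase (h₀ y)).card = (univ.image h₀).card - 1 :=
          Finset.card_erase_of_mem (Finset.mem_image_of_mem h₀ (mem_univ y))
        have h2 : (univ.image h₀).card = Fintype.card V := by
          rw [Finset.card_image_of_injective _ h₀inj, Finset.card_univ]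
        omega
      have hpos : 0 < Fintype.card V := Fintype.card_pos_iff.mpr ⟨u⟩
      have := chromNum_le_of_proper hgproper
      omega
    -- an optimal coloring and a repeated color
    obtain ⟨f, hf⟩ := exists_optimal G
    have hninj : ¬ Function.Injective f := by
      intro hinj
      have : (univ.image f).card = Fintype.card V := by
        rw [Finset.card_image_of_injective _ hinj, Finset.card_univ]
      have h2 := hf.2
      omega
    obtain ⟨a, b, hfab, hab⟩ : ∃ a b, f a = f b ∧ a ≠ b := by
      simp only [Function.Injective, not_forall] at hninj
      obtain ⟨a, b, h1, h2⟩ := hninj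
      exact ⟨a, b, h1, h2⟩
    -- build a bad permutation
    set τ : Equiv.Perm V := Equiv.swap u a with hτ
    have hτu : τ u = a := Equiv.swap_apply_left u a
    have hτva : τ v ≠ a := by
      rw [← hτu]
      exact fun h => huv.ne (τ.injective h).symm
    set ρ : Equiv.Perm V := Equiv.swap (τ v) b with hρ
    set σ : Equiv.Perm V := τ.trans ρ with hσ
    have hσu : σ u = a := by
      simp only [hσ, Equiv.trans_apply, hτu, hρ]
      exact Equiv.swap_apply_of_ne_of_ne hτva.symm hab
    have hσv : σ v = b := by
      simp only [hσ, Equiv.trans_apply, hρ]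
      exact Equiv.swap_apply_left _ _
    have hcimproper : ¬ IsProperColoring G (f ∘ σ) := by
      intro hp
      exact hp huv (by simp [hσu, hσv, hfab])
    have hcv : colVillainy G (f ∘ σ) ≠ 0 := fun h =>
      hcimproper (proper_of_colVillainy_eq_zero σ hf.1 h)
    have hmem : colVillainy G (f ∘ σ) ∈
        {n | ∃ f' c, IsOptimalColoring G f' ∧ IsPermutationOf c f' ∧ colVillainy G c = n} :=
      ⟨f, f ∘ σ, hf, ⟨σ, rfl⟩, rfl⟩
    have := le_csSup (villainy_bddAbove G) hmem
    rw [villainy] at hv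
    omega
  · intro h
    obtain ⟨f, hf⟩ := exists_optimal G
    have hzero : ∀ n ∈ {n | ∃ f c, IsOptimalColoring G f ∧ IsPermutationOf c f ∧
        colVillainy G c = n}, n = 0 := by
      rintro n ⟨f', c, hf', ⟨σ, rfl⟩, rfl⟩
      apply colVillainy_eq_zero_of_proper
      rcases h with rfl | rfl
      · intro a b hab heq
        have hinj : Function.Injective f' := by
          intro p q hpq
          by_contra hne
          exact hf'.1 ((SimpleGraph.top_adj _ _).mpr hne) hpq
        exact ((SimpleGraph.top_adj _ _).mp hab) (σ.injective (hinj heq))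
      · intro a b hab
        simp at hab
    have hne : (Set.Nonempty {n | ∃ f c, IsOptimalColoring G f ∧ IsPermutationOf c f ∧
        colVillainy G c = n}) :=
      ⟨colVillainy G f, f, f, hf, ⟨Equiv.refl V, rfl⟩, rfl⟩
    rw [villainy]
    exact Nat.le_antisymm (csSup_le hne fun n hn => le_of_eq (hzero n hn)) (Nat.zero_le _)
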